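/- Let d, m be positive integers, let X_1, …, X_m be pairwise distinct points in ℝ^d, let p_1, …, p_m be nonnegative integers, and let I = I(X,p) be the associated Hermite ideal. Fix a monomial order on ℝ[x_1,…,x_d], let ⟨LT(I)⟩ be the ideal generated by the leading terms of the nonzero elements of I, and let S_I be the linear span of all monomials that do not lie in ⟨LT(I)⟩. Then the Hermite interpolation problem has a unique solution in S_I: for every family of real values c_{q,α} (1 ≤ q ≤ m, α ∈ ℕ^d with |α| ≤ p_q) there exists a unique polynomial f ∈ S_I such that ∂^α f(X_q) = c_{q,α} for all 1 ≤ q ≤ m and all |α| ≤ p_q. -/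

import Mathlib

open MvPolynomial

/-- The iterated partial derivative `∂^α` as a linear endomorphism of `ℝ[x_1,…,x_d]`. -/
noncomputable def pderivPow {d : ℕ} (α : Fin d → ℕ) :
    Module.End ℝ (MvPolynomial (Fin d) ℝ) :=
  ((List.finRange d).map fun i => ((MvPolynomial.pderiv i).toLinearMap ^ α i)).prod

/-- The Hermite ideal `I(X,p)`, as a set: all polynomials whose partial derivatives of
order up to `p q` all vanish at `X q`, for every `q`. -/
def hermiteSet {d m : ℕ} (X : Fin m → (Fin d → ℝ)) (p : Fin m → ℕ) :
    Set (MvPolynomial (Fin d) ℝ) :=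
  {f | ∀ q, ∀ α : Fin d → ℕ, (∑ i, α i) ≤ p q → MvPolynomial.eval (X q) (pderivPow α f) = 0}

namespace HermiteAux

variable {d : ℕ}

noncomputable abbrev D (i : Fin d) : Module.End ℝ (MvPolynomial (Fin d) ℝ) :=
  (MvPolynomial.pderiv i).toLinearMap

lemma pderiv_pderiv_comm (i j : Fin d) (f : MvPolynomial (Fin d) ℝ) :
    pderiv i (pderiv j f) = pderiv j (pderiv i f) := by
  induction f using MvPolynomial.induction_on' with
  | monomial s a =>
    classical
    simp only [pderiv_monomial]
    rcases eq_or_ne i j with rfl | hij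
    · rfl
    · have h1 : (s - Finsupp.single j 1 : Fin d →₀ ℕ) i = s i := by
        simp [Finsupp.tsub_apply, Finsupp.single_apply, hij.symm]
      have h2 : (s - Finsupp.single i 1 : Fin d →₀ ℕ) j = s j := by
        simp [Finsupp.tsub_apply, Finsupp.single_apply, hij]
      rw [h1, h2, tsub_right_comm, mul_right_comm]
  | add p q hp hq => simp [map_add, hp, hq]

lemma commute_D (i j : Fin d) : Commute (D i) (D j) := by
  apply LinearMap.ext
  intro f
  exact pderiv_pderiv_comm i j f

lemma commute_Dpow (i j : Fin d) (a b : ℕ) : Commute (D i ^ a) (D j ^ b) :=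
  (commute_D i j).pow_pow a b

lemma list_prod_pow_add (l : List (Fin d)) (α β : Fin d → ℕ) :
    (l.map fun i => D i ^ (α i + β i)).prod =
      (l.map fun i => D i ^ α i).prod * (l.map fun i => D i ^ β i).prod := by
  induction l with
  | nil => simp
  | cons i t ih =>
    have hc : Commute (D i ^ β i) ((t.map fun j => D j ^ α j).prod) := by
      apply Commute.list_prod_right
      intro x hx
      obtain ⟨j, _, rfl⟩ := List.mem_map.1 hx
      exact commute_Dpow i j _ _
    simp only [List.map_cons, List.prod_cons]
    rw [pow_add, ih, mul_assoc, mul_assoc]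
    congr 1
    rw [← mul_assoc, hc.eq, mul_assoc]

lemma pderivPow_add (α β : Fin d → ℕ) :
    pderivPow (α + β) = pderivPow α * pderivPow β :=
  list_prod_pow_add _ α β

lemma pderivPow_zero : pderivPow (0 : Fin d → ℕ) = 1 := by
  unfold pderivPow
  rw [List.prod_eq_one]
  intro x hx
  obtain ⟨j, _, rfl⟩ := List.mem_map.1 hx
  simp

lemma pderivPow_single (i : Fin d) : pderivPow (Pi.single i (1:ℕ)) = D i := by
  unfold pderivPow
  have hmem := List.mem_finRange i
  have hnd := List.nodup_finRange d
  revert hmem hnd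
  generalize (List.finRange d) = l
  intro hmem hnd
  induction l with
  | nil => simp at hmem
  | cons j t ih =>
    simp only [List.map_cons, List.prod_cons]
    by_cases hij : j = i
    · subst hij
      have hnt : j ∉ t := (List.nodup_cons.1 hnd).1
      have h1 : (t.map fun k => D k ^ (Pi.single j (1:ℕ)) k).prod = 1 := by
        rw [List.prod_eq_one]
        intro x hx
        obtain ⟨k, hk, rfl⟩ := List.mem_map.1 hx
        have hkj : k ≠ j := fun h => hnt (h ▸ hk)
        simp [Pi.single_eq_of_ne hkj]
      rw [h1, mul_one, Pi.single_eq_same, pow_one]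
    · have hmem' : i ∈ t := by
        rcases List.mem_cons.1 hmem with h | h
        · exact absurd h.symm hij
        · exact h
      rw [Pi.single_eq_of_ne hij, pow_zero, one_mul]
      exact ih hmem' (List.nodup_cons.1 hnd).2

lemma pderivPow_step (α : Fin d → ℕ) (i : Fin d) (f : MvPolynomial (Fin d) ℝ) :
    pderivPow (α + Pi.single i 1) f = pderivPow α (pderiv i f) := by
  rw [pderivPow_add, Module.End.mul_apply, pderivPow_single]
  rfl

lemma exists_decomp {α : Fin d → ℕ} (h : α ≠ 0) :
    ∃ (i : Fin d) (β : Fin d → ℕ), α = β + Pi.single i 1 ∧ (∑ j, β j) + 1 = ∑ j, α j := by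
  have : ∃ i, α i ≠ 0 := by
    by_contra hc
    push_neg at hc
    exact h (funext fun i => hc i)
  obtain ⟨i, hi⟩ := this
  refine ⟨i, α - Pi.single i 1, funext fun j => ?_, ?_⟩
  · rcases eq_or_ne j i with rfl | hji
    · simp only [Pi.add_apply, Pi.sub_apply, Pi.single_eq_same]
      omega
    · simp [Pi.single_eq_of_ne hji]
  · have hs : ∑ j, (Pi.single i 1 : Fin d → ℕ) j = 1 := by
      simp [Pi.single_apply]
    have key : ∑ j, (α j) = ∑ j, ((α - Pi.single i 1 : Fin d → ℕ) j + (Pi.single i 1 : Fin d → ℕ) j) := by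
      apply Finset.sum_congr rfl
      intro j _
      rcases eq_or_ne j i with rfl | hji
      · simp only [Pi.sub_apply, Pi.single_eq_same]
        omega
      · simp [Pi.single_eq_of_ne hji]
    rw [key, Finset.sum_add_distrib, hs]

/-- Evaluation vanishes on a span if it vanishes on the generators. -/
lemma eval_span_zero {a : Fin d → ℝ} {S : Set (MvPolynomial (Fin d) ℝ)}
    (hS : ∀ f ∈ S, eval a f = 0) {f} (hf : f ∈ Submodule.span ℝ S) : eval a f = 0 := by
  induction hf using Submodule.span_induction with
  | mem x hx => exact hS x hx
  | zero => simp
  | add x y _ _ hx hy => simp [hx, hy]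
  | smul c x _ hx => simp [smul_eval, hx]

/-- Leibniz span lemma. -/
lemma pderivPow_mul_mem_span (α : Fin d → ℕ) (f g : MvPolynomial (Fin d) ℝ) :
    pderivPow α (f * g) ∈ Submodule.span ℝ
      {x | ∃ β γ, β + γ = α ∧ x = pderivPow β f * pderivPow γ g} := by
  suffices H : ∀ n (α : Fin d → ℕ), (∑ i, α i) = n → ∀ f g : MvPolynomial (Fin d) ℝ,
      pderivPow α (f * g) ∈ Submodule.span ℝ
        {x | ∃ β γ, β + γ = α ∧ x = pderivPow β f * pderivPow γ g} by
    exact H _ α rfl f g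
  intro n
  induction n using Nat.strong_induction_on with
  | _ n ih =>
  intro α hαn f g
  rcases eq_or_ne α 0 with rfl | hα
  · rw [pderivPow_zero]
    exact Submodule.subset_span ⟨0, 0, by simp, by rw [pderivPow_zero]; rfl⟩
  · obtain ⟨i, α', rfl, hsum⟩ := exists_decomp hα
    rw [pderivPow_step, pderiv_mul, map_add]
    have h1 := ih (∑ j, α' j) (by omega) α' rfl (pderiv i f) g
    have h2 := ih (∑ j, α' j) (by omega) α' rfl f (pderiv i g)
    apply Submodule.add_mem
    · refine Submodule.span_le.2 ?_ h1
      rintro x ⟨β, γ, hbg, rfl⟩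
      exact Submodule.subset_span ⟨β + Pi.single i 1, γ,
        by rw [← hbg]; funext j; simp [Pi.add_apply]; ring,
        by rw [pderivPow_step]⟩
    · refine Submodule.span_le.2 ?_ h2
      rintro x ⟨β, γ, hbg, rfl⟩
      exact Submodule.subset_span ⟨β, γ + Pi.single i 1,
        by rw [← hbg]; funext j; simp [Pi.add_apply]; ring,
        by rw [pderivPow_step]⟩

/-- Refined Leibniz span lemma. -/
lemma pderivPow_mul_sub_mem_span (α : Fin d → ℕ) (f g : MvPolynomial (Fin d) ℝ) :
    pderivPow α (f * g) - f * pderivPow α g ∈ Submodule.span ℝ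
      {x | ∃ β γ, β + γ = α ∧ β ≠ 0 ∧ x = pderivPow β f * pderivPow γ g} := by
  suffices H : ∀ n (α : Fin d → ℕ), (∑ i, α i) = n → ∀ f g : MvPolynomial (Fin d) ℝ,
      pderivPow α (f * g) - f * pderivPow α g ∈ Submodule.span ℝ
        {x | ∃ β γ, β + γ = α ∧ β ≠ 0 ∧ x = pderivPow β f * pderivPow γ g} by
    exact H _ α rfl f g
  intro n
  induction n using Nat.strong_induction_on with
  | _ n ih =>
  intro α hαn f g
  rcases eq_or_ne α 0 with rfl | hα
  · rw [pderivPow_zero]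
    simp only [Module.End.one_apply, sub_self]
    exact Submodule.zero_mem _
  · obtain ⟨i, α', rfl, hsum⟩ := exists_decomp hα
    rw [pderivPow_step, pderiv_mul, map_add]
    have key : pderivPow α' (pderiv i f * g) +
        (pderivPow α' (f * pderiv i g) - f * pderivPow α' (pderiv i g))
        ∈ Submodule.span ℝ {x | ∃ β γ, β + γ = α' + Pi.single i 1 ∧ β ≠ 0 ∧
            x = pderivPow β f * pderivPow γ g} := by
      apply Submodule.add_mem
      · refine Submodule.span_le.2 ?_ (pderivPow_mul_mem_span α' (pderiv i f) g)
        rintro x ⟨β, γ, hbg, rfl⟩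
        refine Submodule.subset_span ⟨β + Pi.single i 1, γ, ?_, ?_, by rw [pderivPow_step]⟩
        · rw [← hbg]; funext j; simp [Pi.add_apply]; ring
        · intro hc
          have := congrFun hc i
          simp [Pi.add_apply, Pi.single_eq_same] at this
      · refine Submodule.span_le.2 ?_ (ih (∑ j, α' j) (by omega) α' rfl f (pderiv i g))
        rintro x ⟨β, γ, hbg, hβ, rfl⟩
        refine Submodule.subset_span ⟨β, γ + Pi.single i 1, ?_, hβ, by rw [pderivPow_step]⟩
        rw [← hbg]; funext j; simp [Pi.add_apply]; ring
    rw [pderivPow_step α' i g]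
    have heq : pderivPow α' (pderiv i f * g) + pderivPow α' (f * pderiv i g)
        - f * pderivPow α' (pderiv i g)
        = pderivPow α' (pderiv i f * g) +
          (pderivPow α' (f * pderiv i g) - f * pderivPow α' (pderiv i g)) := by ring
    rw [heq]
    exact key

/-- Vanishing of all derivatives up to order `k` at a point. -/
def Vanish (a : Fin d → ℝ) (k : ℕ) (f : MvPolynomial (Fin d) ℝ) : Prop :=
  ∀ α : Fin d → ℕ, (∑ i, α i) ≤ k → eval a (pderivPow α f) = 0

lemma Vanish.mul {a k} {f : MvPolynomial (Fin d) ℝ} (hf : Vanish a k f)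
    (g : MvPolynomial (Fin d) ℝ) : Vanish a k (f * g) := by
  intro α hα
  apply eval_span_zero ?_ (pderivPow_mul_mem_span α f g)
  rintro x ⟨β, γ, hbg, rfl⟩
  have hβ : (∑ i, β i) ≤ k := by
    have : (∑ i, β i) + (∑ i, γ i) = ∑ i, α i := by
      rw [← Finset.sum_add_distrib, ← hbg]; rfl
    omega
  rw [eval_mul, hf β hβ, zero_mul]

lemma Vanish.zero (a k) : Vanish a k (0 : MvPolynomial (Fin d) ℝ) := by
  intro α hα; simp

lemma Vanish.add {a k} {f g : MvPolynomial (Fin d) ℝ} (hf : Vanish a k f)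
    (hg : Vanish a k g) : Vanish a k (f + g) := by
  intro α hα; simp [map_add, hf α hα, hg α hα]

lemma Vanish.sub {a k} {f g : MvPolynomial (Fin d) ℝ} (hf : Vanish a k f)
    (hg : Vanish a k g) : Vanish a k (f - g) := by
  intro α hα; simp [map_sub, hf α hα, hg α hα]

/-- Claim C: powers of a polynomial vanishing at `a` vanish to high order. -/
lemma vanish_pow {a : Fin d → ℝ} {v : MvPolynomial (Fin d) ℝ} (hv : eval a v = 0) (k : ℕ) :
    Vanish a k (v ^ (k + 1)) := by
  induction k with
  | zero =>
    intro α hα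
    have : α = 0 := funext fun i => by
      have h1 := Finset.single_le_sum (f := α) (fun j _ => Nat.zero_le _)
        (Finset.mem_univ i)
      show α i = 0
      omega
    subst this
    rw [pderivPow_zero]
    simpa using hv
  | succ k ihk =>
    intro α hα
    rcases eq_or_ne α 0 with rfl | hα0
    · rw [pderivPow_zero]
      simp [hv]
    · obtain ⟨i, α', rfl, hsum⟩ := exists_decomp hα0
      rw [pderivPow_step, pderiv_pow]
      have h1 : ((k + 2 : ℕ) : MvPolynomial (Fin d) ℝ) * v ^ (k + 2 - 1) * pderiv i v
          = (k + 2) • (v ^ (k + 1) * pderiv i v) := by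
        rw [nsmul_eq_mul]
        push_cast
        ring
      rw [h1, map_nsmul, map_nsmul]
      have h2 := (ihk.mul (pderiv i v)) α' (by omega)
      rw [h2, smul_zero]

section Univariate

lemma pderiv_sub_C (i : Fin d) (c : ℝ) : pderiv i (X i - C c : MvPolynomial (Fin d) ℝ) = 1 := by
  simp [pderiv_C]

lemma pderiv_pow_ne {j i : Fin d} (hji : j ≠ i) (c : ℝ) (k : ℕ) :
    pderiv j ((X i - C c : MvPolynomial (Fin d) ℝ) ^ k) = 0 := by
  rw [pderiv_pow]
  have : pderiv j (X i - C c : MvPolynomial (Fin d) ℝ) = 0 := by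
    simp [pderiv_C, pderiv_X_of_ne (Ne.symm hji)]
  rw [this, mul_zero]

lemma Dpow_shift (i : Fin d) (c : ℝ) (k n : ℕ) :
    (D i ^ n) ((X i - C c : MvPolynomial (Fin d) ℝ) ^ k)
      = (k.descFactorial n) • (X i - C c : MvPolynomial (Fin d) ℝ) ^ (k - n) := by
  induction n with
  | zero => simp
  | succ n ihn =>
    rw [pow_succ', Module.End.mul_apply, ihn, map_nsmul]
    have : D i ((X i - C c : MvPolynomial (Fin d) ℝ) ^ (k - n))
        = (k - n) • (X i - C c : MvPolynomial (Fin d) ℝ) ^ (k - n - 1) := by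
      show pderiv i _ = _
      rw [pderiv_pow, pderiv_sub_C, mul_one, nsmul_eq_mul]
    rw [this, smul_smul, Nat.descFactorial_succ]
    have hkn : k - n - 1 = k - (n + 1) := by omega
    rw [hkn, Nat.mul_comm]

lemma eval_Dpow_shift (a : Fin d → ℝ) (i : Fin d) (k n : ℕ) :
    eval a ((D i ^ n) ((X i - C (a i) : MvPolynomial (Fin d) ℝ) ^ k))
      = if n = k then (k.factorial : ℝ) else 0 := by
  rw [Dpow_shift, map_nsmul]
  have he : eval a ((X i - C (a i) : MvPolynomial (Fin d) ℝ) ^ (k - n)) = (0 : ℝ) ^ (k - n) := by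
    simp
  rw [he]
  rcases eq_or_ne n k with rfl | hnk
  · simp [Nat.descFactorial_self]
  · rcases lt_or_gt_of_ne hnk with h | h
    · rw [zero_pow (by omega), smul_zero, if_neg hnk]
    · rw [(Nat.descFactorial_eq_zero_iff_lt).2 h, zero_smul, if_neg hnk]

end Univariate

section Factorization

lemma H1 {j : Fin d} {u : MvPolynomial (Fin d) ℝ} (hu : pderiv j u = 0)
    (w : MvPolynomial (Fin d) ℝ) : pderiv j (u * w) = u * pderiv j w := by
  rw [pderiv_mul, hu, zero_mul, zero_add]

lemma H2 {j : Fin d} {u : MvPolynomial (Fin d) ℝ} (hu : pderiv j u = 0)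
    (n : ℕ) (w : MvPolynomial (Fin d) ℝ) : (D j ^ n) (u * w) = u * (D j ^ n) w := by
  induction n with
  | zero => simp
  | succ n ihn => rw [pow_succ', Module.End.mul_apply, ihn, Module.End.mul_apply]; exact H1 hu _

lemma H2' {i : Fin d} {w : MvPolynomial (Fin d) ℝ} (hw : pderiv i w = 0)
    (n : ℕ) (u : MvPolynomial (Fin d) ℝ) : (D i ^ n) (u * w) = ((D i ^ n) u) * w := by
  induction n with
  | zero => simp
  | succ n ihn =>
    rw [pow_succ', Module.End.mul_apply, ihn, Module.End.mul_apply]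
    show pderiv i _ = _
    rw [pderiv_mul, hw, mul_zero, add_zero]
    rfl

lemma H3 {j : Fin d} {u w : MvPolynomial (Fin d) ℝ} (hu : pderiv j u = 0)
    (hw : pderiv j w = 0) : pderiv j (u * w) = 0 := by
  rw [pderiv_mul, hu, hw, zero_mul, mul_zero, add_zero]

lemma H4 {j k' : Fin d} (n : ℕ) (u : MvPolynomial (Fin d) ℝ) (hu : pderiv j u = 0) :
    pderiv j ((D k' ^ n) u) = 0 := by
  induction n generalizing u with
  | zero => simpa using hu
  | succ n ihn =>
    rw [pow_succ, Module.End.mul_apply]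
    refine ihn (pderiv k' u) ?_
    rw [pderiv_pderiv_comm j k' u, hu, map_zero]

lemma sideZero (l : List (Fin d)) (u' : Fin d → MvPolynomial (Fin d) ℝ) (j : Fin d)
    (h : ∀ i ∈ l, pderiv j (u' i) = 0) : pderiv j ((l.map u').prod) = 0 := by
  induction l with
  | nil => simp [pderiv_one]
  | cons i t iht =>
    rw [List.map_cons, List.prod_cons]
    exact H3 (h i (List.mem_cons_self)) (iht fun i' hi' => h i' (List.mem_cons_of_mem _ hi'))

lemma H5 (l : List (Fin d)) (β : Fin d → ℕ) {u : MvPolynomial (Fin d) ℝ}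
    (hu : ∀ j ∈ l, pderiv j u = 0) (w : MvPolynomial (Fin d) ℝ) :
    ((l.map fun i => D i ^ β i).prod) (u * w) = u * ((l.map fun i => D i ^ β i).prod) w := by
  induction l with
  | nil => simp
  | cons j t iht =>
    rw [List.map_cons, List.prod_cons, Module.End.mul_apply, Module.End.mul_apply,
      iht fun j' hj' => hu j' (List.mem_cons_of_mem _ hj'),
      H2 (hu j (List.mem_cons_self))]

lemma prodFactor (l : List (Fin d)) (hl : l.Nodup) (u : Fin d → MvPolynomial (Fin d) ℝ)
    (hu : ∀ i ∈ l, ∀ j, j ≠ i → pderiv j (u i) = 0) (β : Fin d → ℕ) :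
    ((l.map fun i => D i ^ β i).prod) ((l.map u).prod)
      = (l.map fun i => (D i ^ β i) (u i)).prod := by
  induction l with
  | nil => simp
  | cons i t iht =>
    have hnt : i ∉ t := (List.nodup_cons.1 hl).1
    rw [List.map_cons, List.prod_cons, List.map_cons, List.prod_cons, Module.End.mul_apply,
      H5 t β (fun j hj => hu i (List.mem_cons_self) j (fun h => hnt (h ▸ hj))) _,
      iht (List.nodup_cons.1 hl).2
        (fun i' hi' j hj => hu i' (List.mem_cons_of_mem _ hi') j hj)]
    rw [List.map_cons, List.prod_cons]
    have hR : pderiv i ((t.map fun i' => (D i' ^ β i') (u i')).prod) = 0 := by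
      apply sideZero
      intro i' hi'
      have hne : i ≠ i' := fun h => hnt (h ▸ hi')
      exact H4 _ _ (hu i' (List.mem_cons_of_mem _ hi') i hne)
    exact H2' hR _ _

end Factorization

section Jets

/-- Shifted monomial `∏ (X i - a i) ^ (α i)`. -/
noncomputable def shifted (a : Fin d → ℝ) (α : Fin d → ℕ) : MvPolynomial (Fin d) ℝ :=
  ((List.finRange d).map fun i => (X i - C (a i)) ^ (α i)).prod

lemma eval_pderivPow_shifted (a : Fin d → ℝ) (α β : Fin d → ℕ) :
    eval a (pderivPow β (shifted a α))
      = if β = α then (∏ i, ((α i).factorial : ℝ)) else 0 := by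
  have hfac : pderivPow β (shifted a α)
      = ((List.finRange d).map fun i => (D i ^ β i) ((X i - C (a i)) ^ (α i))).prod := by
    have := prodFactor (List.finRange d) (List.nodup_finRange d)
      (fun i => (X i - C (a i)) ^ (α i))
      (fun i _ j hj => pderiv_pow_ne hj (a i) (α i)) β
    exact this
  rw [hfac, map_list_prod, List.map_map]
  have hentry : ∀ i : Fin d,
      ((eval a) ∘ fun i => (D i ^ β i) ((X i - C (a i)) ^ (α i))) i
        = if β i = α i then ((α i).factorial : ℝ) else 0 := by
    intro i
    exact eval_Dpow_shift a i (α i) (β i)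
  rcases eq_or_ne β α with rfl | hβα
  · rw [if_pos rfl, Fin.prod_univ_def]
    congr 1
    apply List.map_congr_left
    intro i _
    rw [hentry i, if_pos rfl]
  · rw [if_neg hβα]
    have : ∃ i, β i ≠ α i := by
      by_contra hc
      push_neg at hc
      exact hβα (funext hc)
    obtain ⟨i, hi⟩ := this
    apply List.prod_eq_zero
    refine List.mem_map.2 ⟨i, List.mem_finRange i, ?_⟩
    rw [hentry i, if_neg hi]

/-- The finite index type of multi-indices of total degree at most `k`. -/
def Wk (d k : ℕ) : Type := {α : Fin d → ℕ // (∑ i, α i) ≤ k}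

lemma Wk.bound {k : ℕ} (α : Wk d k) (i : Fin d) : α.1 i ≤ k := by
  have h1 := Finset.single_le_sum (f := α.1) (fun j _ => Nat.zero_le _) (Finset.mem_univ i)
  have h2 := α.2
  omega

noncomputable instance (k : ℕ) : Fintype (Wk d k) := by
  apply Fintype.ofInjective (fun α : Wk d k => fun i => (⟨α.1 i, Nat.lt_succ_of_le (Wk.bound α i)⟩ : Fin (k+1)))
  intro α β h
  apply Subtype.ext
  funext i
  exact congrArg Fin.val (congrFun h i)

/-- Evaluation as a linear map. -/
noncomputable def evalL (a : Fin d → ℝ) : MvPolynomial (Fin d) ℝ →ₗ[ℝ] ℝ where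
  toFun := eval a
  map_add' x y := map_add _ _ _
  map_smul' c x := by simp [smul_eval]

/-- The jet of order `k` at point `a`, as a linear map. -/
noncomputable def jetL (a : Fin d → ℝ) (k : ℕ) :
    MvPolynomial (Fin d) ℝ →ₗ[ℝ] (Wk d k → ℝ) :=
  LinearMap.pi fun α => (evalL a) ∘ₗ (pderivPow α.1)

lemma jetL_apply (a : Fin d → ℝ) (k : ℕ) (f : MvPolynomial (Fin d) ℝ) (α : Wk d k) :
    jetL a k f α = eval a (pderivPow α.1 f) := rfl

/-- Realization of a prescribed jet by a polynomial. -/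
noncomputable def realizeL (a : Fin d → ℝ) (k : ℕ) :
    (Wk d k → ℝ) →ₗ[ℝ] MvPolynomial (Fin d) ℝ :=
  ∑ α : Wk d k, (∏ i, ((α.1 i).factorial : ℝ))⁻¹ •
    ((LinearMap.toSpanSingleton ℝ _ (shifted a α.1)).comp (LinearMap.proj α))

lemma fact_prod_ne_zero (α : Fin d → ℕ) : (∏ i, ((α i).factorial : ℝ)) ≠ 0 := by
  apply ne_of_gt
  apply Finset.prod_pos
  intro i _
  exact_mod_cast (α i).factorial_pos

lemma jetL_realizeL (a : Fin d → ℝ) (k : ℕ) (v : Wk d k → ℝ) :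
    jetL a k (realizeL a k v) = v := by
  classical
  funext β
  rw [jetL_apply]
  rw [realizeL, LinearMap.sum_apply]
  rw [map_sum, map_sum]
  have hterm : ∀ α : Wk d k,
      eval a (pderivPow β.1 (((∏ i, ((α.1 i).factorial : ℝ))⁻¹ •
        ((LinearMap.toSpanSingleton ℝ _ (shifted a α.1)).comp (LinearMap.proj α))) v))
      = if β = α then v α else 0 := by
    intro α
    have : ((∏ i, ((α.1 i).factorial : ℝ))⁻¹ •
        ((LinearMap.toSpanSingleton ℝ _ (shifted a α.1)).comp (LinearMap.proj α))) v
        = ((∏ i, ((α.1 i).factorial : ℝ))⁻¹ * v α) • shifted a α.1 := by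
      simp [LinearMap.smul_apply, LinearMap.toSpanSingleton_apply, smul_smul]
    rw [this, map_smul, smul_eval, eval_pderivPow_shifted]
    rcases eq_or_ne β α with rfl | hβα
    · rw [if_pos rfl, if_pos rfl]
      rw [mul_comm (∏ i, ((β.1 i).factorial : ℝ))⁻¹ (v β), mul_assoc,
        inv_mul_cancel₀ (fact_prod_ne_zero β.1), mul_one]
    · have h1 : β.1 ≠ α.1 := fun h => hβα (Subtype.ext h)
      rw [if_neg h1, if_neg hβα, mul_zero]
  rw [Finset.sum_congr rfl fun α _ => hterm α]
  simp [Finset.sum_ite_eq]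

end Jets

section MulSurj

lemma vanish_of_mul (a : Fin d → ℝ) {h f : MvPolynomial (Fin d) ℝ}
    (ha : eval a h ≠ 0) (k : ℕ)
    (hv : ∀ α : Fin d → ℕ, (∑ i, α i) ≤ k → eval a (pderivPow α (h * f)) = 0) :
    ∀ α : Fin d → ℕ, (∑ i, α i) ≤ k → eval a (pderivPow α f) = 0 := by
  suffices H : ∀ n, ∀ α : Fin d → ℕ, (∑ i, α i) = n → (∑ i, α i) ≤ k →
      eval a (pderivPow α f) = 0 by
    exact fun α hα => H _ α rfl hα
  intro n
  induction n using Nat.strong_induction_on with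
  | _ n ih =>
  intro α hαn hαk
  have h0 : eval a (pderivPow α (h * f) - h * pderivPow α f) = 0 := by
    apply eval_span_zero ?_ (pderivPow_mul_sub_mem_span α h f)
    rintro x ⟨β, γ, hbg, hβ, rfl⟩
    have hsum : (∑ i, β i) + (∑ i, γ i) = ∑ i, α i := by
      rw [← Finset.sum_add_distrib, ← hbg]; rfl
    have hβpos : 1 ≤ ∑ i, β i := by
      by_contra hc
      push_neg at hc
      apply hβ
      funext i
      have := Finset.single_le_sum (f := β) (fun j _ => Nat.zero_le _) (Finset.mem_univ i)
      show β i = 0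
      omega
    have hγ : eval a (pderivPow γ f) = 0 := ih (∑ i, γ i) (by omega) γ rfl (by omega)
    rw [eval_mul, hγ, mul_zero]
  rw [map_sub, hv α hαk, eval_mul, zero_sub, neg_eq_zero] at h0
  exact (mul_eq_zero.1 h0).resolve_left ha

lemma exists_mul_jet (a : Fin d → ℝ) (k : ℕ) {h : MvPolynomial (Fin d) ℝ}
    (ha : eval a h ≠ 0) (w : Wk d k → ℝ) :
    ∃ t : MvPolynomial (Fin d) ℝ, jetL a k (h * t) = w := by
  set Φ : (Wk d k → ℝ) →ₗ[ℝ] (Wk d k → ℝ) :=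
    (jetL a k) ∘ₗ (LinearMap.mulLeft ℝ h) ∘ₗ (realizeL a k) with hΦ
  have hΦ_apply : ∀ v, Φ v = jetL a k (h * realizeL a k v) := by
    intro v
    simp [hΦ, LinearMap.mulLeft_apply]
  have hker : ∀ v, Φ v = 0 → v = 0 := by
    intro v hv0
    rw [hΦ_apply] at hv0
    have h1 : ∀ α : Fin d → ℕ, (∑ i, α i) ≤ k →
        eval a (pderivPow α (h * realizeL a k v)) = 0 := by
      intro α hα
      have := congrFun hv0 ⟨α, hα⟩
      exact this
    have h2 := vanish_of_mul a ha k h1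
    have h3 : jetL a k (realizeL a k v) = 0 := by
      funext α
      rw [jetL_apply]
      exact h2 α.1 α.2
    rw [jetL_realizeL] at h3
    exact h3
  have hinj : Function.Injective Φ :=
    LinearMap.ker_eq_bot.mp (LinearMap.ker_eq_bot'.mpr hker)
  obtain ⟨v, hv⟩ := (LinearMap.surjective_of_injective hinj) w
  exact ⟨realizeL a k v, by rw [← hΦ_apply, hv]⟩

end MulSurj

section Global

variable {m : ℕ} (XX : Fin m → (Fin d → ℝ)) (p : Fin m → ℕ)

/-- The linear form `⟨x - XX r, XX q - XX r⟩`. -/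
noncomputable def lf (q r : Fin m) : MvPolynomial (Fin d) ℝ :=
  ∑ i, C (XX q i - XX r i) * (X i - C (XX r i))

lemma eval_lf_self (q r : Fin m) : eval (XX r) (lf XX q r) = 0 := by
  rw [lf, map_sum]
  apply Finset.sum_eq_zero
  intro i _
  simp

lemma eval_lf_other (q r : Fin m) :
    eval (XX q) (lf XX q r) = ∑ i, (XX q i - XX r i) ^ 2 := by
  rw [lf, map_sum]
  apply Finset.sum_congr rfl
  intro i _
  simp [sq]

/-- The bump `∏_{r ≠ q} ℓ_r ^ (p r + 1)`. -/
noncomputable def bump (q : Fin m) : MvPolynomial (Fin d) ℝ :=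
  ∏ r ∈ Finset.univ.erase q, (lf XX q r) ^ (p r + 1)

lemma eval_bump_ne (hX : Function.Injective XX) (q : Fin m) :
    eval (XX q) (bump XX p q) ≠ 0 := by
  rw [bump, map_prod]
  apply Finset.prod_ne_zero_iff.2
  intro r hr
  rw [map_pow, eval_lf_other]
  apply pow_ne_zero
  intro hzero
  have hall : ∀ i, (XX q i - XX r i) ^ 2 = 0 := by
    intro i
    have hnn : ∀ i ∈ Finset.univ, (0:ℝ) ≤ (XX q i - XX r i) ^ 2 := fun i _ => sq_nonneg _
    exact (Finset.sum_eq_zero_iff_of_nonneg hnn).1 hzero i (Finset.mem_univ i)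
  have hqr : XX q = XX r := by
    funext i
    have := pow_eq_zero_iff (n := 2) (by norm_num) |>.1 (hall i)
    linarith [sub_eq_zero.1 this]
  exact (Finset.mem_erase.1 hr).1 (hX hqr).symm

lemma vanish_bump (q r : Fin m) (hrq : r ≠ q) : Vanish (XX r) (p r) (bump XX p q) := by
  have hmem : r ∈ Finset.univ.erase q := Finset.mem_erase.2 ⟨hrq, Finset.mem_univ r⟩
  rw [bump, ← Finset.mul_prod_erase _ _ hmem]
  exact Vanish.mul (vanish_pow (eval_lf_self XX q r) (p r)) _

/-- Existence of a global Hermite interpolant. -/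
lemma exists_interpolant (hX : Function.Injective XX) (c : Fin m → (Fin d → ℕ) → ℝ) :
    ∃ F : MvPolynomial (Fin d) ℝ, ∀ q, ∀ α : Fin d → ℕ, (∑ i, α i) ≤ p q →
      eval (XX q) (pderivPow α F) = c q α := by
  have hch : ∀ q : Fin m, ∃ t : MvPolynomial (Fin d) ℝ,
      jetL (XX q) (p q) (bump XX p q * t) = fun α => c q α.1 :=
    fun q => exists_mul_jet (XX q) (p q) (eval_bump_ne XX p hX q) _
  choose t ht using hch
  refine ⟨∑ q, bump XX p q * t q, ?_⟩
  intro q α hα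
  rw [map_sum, map_sum]
  rw [Finset.sum_eq_single_of_mem q (Finset.mem_univ q)]
  · have := congrFun (ht q) ⟨α, hα⟩
    exact this
  · intro r _ hrq
    exact (vanish_bump XX p r q hrq.symm).mul (t r) α hα

end Global

section Groebner

variable (mo : MonomialOrder (Fin d)) {m : ℕ} (XX : Fin m → (Fin d → ℝ)) (p : Fin m → ℕ)

/-- The set of leading terms of nonzero elements of the Hermite ideal. -/
def ltSet : Set (MvPolynomial (Fin d) ℝ) :=
  {lt : MvPolynomial (Fin d) ℝ |
    ∃ h ∈ hermiteSet XX p, h ≠ 0 ∧ ∃ β₀ ∈ h.support,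
      (∀ γ ∈ h.support, mo.toSyn γ ≤ mo.toSyn β₀) ∧
      lt = monomial β₀ (h.coeff β₀)}

/-- The set of leading exponents of nonzero elements of the Hermite ideal. -/
def degSet : Set (Fin d →₀ ℕ) :=
  {δ | ∃ h ∈ hermiteSet XX p, h ≠ 0 ∧ δ ∈ h.support ∧
    ∀ γ ∈ h.support, mo.toSyn γ ≤ mo.toSyn δ}

lemma hermite_mem_iff (f : MvPolynomial (Fin d) ℝ) :
    f ∈ hermiteSet XX p ↔ ∀ q, Vanish (XX q) (p q) f := Iff.rfl

lemma hermite_zero : (0 : MvPolynomial (Fin d) ℝ) ∈ hermiteSet XX p :=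
  fun q => Vanish.zero _ _

lemma hermite_add {f g : MvPolynomial (Fin d) ℝ} (hf : f ∈ hermiteSet XX p)
    (hg : g ∈ hermiteSet XX p) : f + g ∈ hermiteSet XX p :=
  fun q => Vanish.add (hf q) (hg q)

lemma hermite_mul {f : MvPolynomial (Fin d) ℝ} (hf : f ∈ hermiteSet XX p)
    (g : MvPolynomial (Fin d) ℝ) : g * f ∈ hermiteSet XX p :=
  fun q => by rw [mul_comm]; exact Vanish.mul (hf q) g

lemma span_ltSet_eq :
    Ideal.span (ltSet mo XX p)
      = Ideal.span ((fun s => monomial s (1 : ℝ)) '' degSet mo XX p) := by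
  apply le_antisymm
  · rw [Ideal.span_le]
    rintro x ⟨h, hherm, hh0, β₀, hβ₀, hmax, rfl⟩
    have hmem : monomial β₀ (1:ℝ) ∈ Ideal.span ((fun s => monomial s (1 : ℝ)) '' degSet mo XX p) :=
      Ideal.subset_span ⟨β₀, ⟨h, hherm, hh0, hβ₀, hmax⟩, rfl⟩
    have : (monomial β₀) (h.coeff β₀) = C (h.coeff β₀) * monomial β₀ (1:ℝ) := by
      rw [C_mul_monomial, mul_one]
    rw [this]
    exact Ideal.mul_mem_left _ _ hmem
  · rw [Ideal.span_le]
    rintro x ⟨δ, ⟨h, hherm, hh0, hδ, hmax⟩, rfl⟩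
    have hc : h.coeff δ ≠ 0 := mem_support_iff.1 hδ
    have hmem : (monomial δ) (h.coeff δ) ∈ Ideal.span (ltSet mo XX p) :=
      Ideal.subset_span ⟨h, hherm, hh0, δ, hδ, hmax, rfl⟩
    show ((monomial δ) (1:ℝ) : MvPolynomial (Fin d) ℝ) ∈ Ideal.span (ltSet mo XX p)
    have : (monomial δ) (1:ℝ) = C (h.coeff δ)⁻¹ * monomial δ (h.coeff δ) := by
      rw [C_mul_monomial, inv_mul_cancel₀ hc]
    rw [this]
    exact Ideal.mul_mem_left _ _ hmem

/-- The span of standard monomials. -/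
noncomputable def stdSpan : Submodule ℝ (MvPolynomial (Fin d) ℝ) :=
  Submodule.span ℝ {g : MvPolynomial (Fin d) ℝ |
    ∃ β : Fin d →₀ ℕ, g = monomial β (1 : ℝ) ∧ g ∉ Ideal.span (ltSet mo XX p)}

lemma support_of_mem_stdSpan {f : MvPolynomial (Fin d) ℝ} (hf : f ∈ stdSpan mo XX p) :
    ∀ β ∈ f.support, (monomial β (1:ℝ)) ∉ Ideal.span (ltSet mo XX p) := by
  induction hf using Submodule.span_induction with
  | mem x hx =>
    obtain ⟨β, rfl, hβ⟩ := hx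
    intro γ hγ
    classical
    rw [support_monomial, if_neg (one_ne_zero)] at hγ
    rw [Finset.mem_singleton] at hγ
    subst hγ
    exact hβ
  | zero => simp
  | add x y _ _ hx hy =>
    intro β hβ
    classical
    rcases Finset.mem_union.1 (support_add hβ) with h | h
    · exact hx β h
    · exact hy β h
  | smul c x _ hx =>
    intro β hβ
    exact hx β (support_smul hβ)

/-- Decomposition: every polynomial is a sum of an element of the Hermite ideal
and a polynomial supported on standard monomials. -/
lemma decompose (f : MvPolynomial (Fin d) ℝ) :
    ∃ u ∈ hermiteSet XX p, ∃ r ∈ stdSpan mo XX p, f = u + r := by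
  suffices H : ∀ s : mo.syn, ∀ f : MvPolynomial (Fin d) ℝ, f.support.sup mo.toSyn = s →
      ∃ u ∈ hermiteSet XX p, ∃ r ∈ stdSpan mo XX p, f = u + r by
    exact H _ f rfl
  intro s
  induction s using WellFoundedLT.induction with
  | _ s ih =>
  intro f hfs
  rcases eq_or_ne f 0 with rfl | hf0
  · exact ⟨0, hermite_zero XX p, 0, Submodule.zero_mem _, by simp⟩
  have hsupp : f.support.Nonempty := by
    rw [Finset.nonempty_iff_ne_empty]
    intro hc
    exact hf0 (support_eq_empty.1 hc)
  obtain ⟨β₀, hβ₀mem, hβ₀eq⟩ := Finset.exists_mem_eq_sup f.support hsupp mo.toSyn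
  have hmax : ∀ γ ∈ f.support, mo.toSyn γ ≤ mo.toSyn β₀ := fun γ hγ => by
    rw [← hβ₀eq]; exact Finset.le_sup hγ
  have hcoeff : f.coeff β₀ ≠ 0 := mem_support_iff.1 hβ₀mem
  -- common step: given w with matching top coefficient and support dominated by β₀,
  -- plus its classification, recurse on f - w
  by_cases hstd : (monomial β₀ (1:ℝ)) ∈ Ideal.span (ltSet mo XX p)
  · -- non-standard: reduce by an element of the Hermite ideal
    have hmem : (monomial β₀ (1:ℝ))
        ∈ Ideal.span ((fun s => monomial s (1 : ℝ)) '' degSet mo XX p) := by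
      rw [← span_ltSet_eq]; exact hstd
    rw [mem_ideal_span_monomial_image] at hmem
    obtain ⟨δ, hδdeg, hδle⟩ := hmem β₀ (by
      classical
      rw [support_monomial, if_neg (one_ne_zero)]
      exact Finset.mem_singleton_self β₀)
    obtain ⟨h, hherm, hh0, hδsup, hδmax⟩ := hδdeg
    set e : Fin d →₀ ℕ := β₀ - δ with he
    set w : MvPolynomial (Fin d) ℝ := monomial e (f.coeff β₀ / h.coeff δ) * h with hw
    have hwherm : w ∈ hermiteSet XX p := hermite_mul XX p hherm _
    have hchδ : h.coeff δ ≠ 0 := mem_support_iff.1 hδsup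
    have hwcoeff : w.coeff β₀ = f.coeff β₀ := by
      rw [hw, coeff_monomial_mul', if_pos (he ▸ tsub_le_self), he,
        tsub_tsub_cancel_of_le hδle, div_mul_cancel₀ _ hchδ]
    have hwsupp : ∀ γ ∈ w.support, γ ≠ β₀ → mo.toSyn γ < mo.toSyn β₀ := by
      intro γ hγ hγne
      have hcγ : w.coeff γ ≠ 0 := mem_support_iff.1 hγ
      rw [hw, coeff_monomial_mul'] at hcγ
      by_cases hle : e ≤ γ
      · rw [if_pos hle] at hcγ
        have hγ'mem : γ - e ∈ h.support := mem_support_iff.2 fun hc => hcγ (by rw [hc, mul_zero])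
        have hγeq : γ = e + (γ - e) := (add_tsub_cancel_of_le hle).symm
        have hβ₀eq' : β₀ = e + δ := by
          rw [he, tsub_add_cancel_of_le hδle]
        have hne : γ - e ≠ δ := by
          intro hc
          apply hγne
          rw [hγeq, hc, ← hβ₀eq']
        have hlt : mo.toSyn (γ - e) < mo.toSyn δ :=
          lt_of_le_of_ne (hδmax _ hγ'mem) (fun hc => hne (mo.toSyn.injective hc))
        calc mo.toSyn γ = mo.toSyn e + mo.toSyn (γ - e) := by
                rw [← map_add, ← hγeq]
          _ < mo.toSyn e + mo.toSyn δ := by exact add_lt_add_of_le_of_lt le_rfl hlt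
          _ = mo.toSyn β₀ := by rw [← map_add, ← hβ₀eq']
      · rw [if_neg hle] at hcγ
        exact absurd rfl hcγ
    -- recurse
    rcases eq_or_ne (f - w) 0 with hfw | hfw
    · exact ⟨w, hwherm, 0, Submodule.zero_mem _, by rw [sub_eq_zero.1 hfw]; ring⟩
    · have hsublt : (f - w).support.sup mo.toSyn < s := by
        rw [← hfs, hβ₀eq]
        have hnonempty : (f - w).support.Nonempty := by
          rw [Finset.nonempty_iff_ne_empty]
          intro hc
          exact hfw (support_eq_empty.1 hc)
        have hall : ∀ γ ∈ (f - w).support, mo.toSyn γ < mo.toSyn β₀ := by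
          intro γ hγ
          have hcγ : (f - w).coeff γ ≠ 0 := mem_support_iff.1 hγ
          have hγne : γ ≠ β₀ := by
            intro hc
            subst hc
            rw [coeff_sub, hwcoeff, sub_self] at hcγ
            exact hcγ rfl
          rw [coeff_sub] at hcγ
          by_cases hγf : γ ∈ f.support
          · exact lt_of_le_of_ne (hmax γ hγf) fun hc => hγne (mo.toSyn.injective hc)
          · have h1 : f.coeff γ = 0 := notMem_support_iff.1 hγf
            have h2 : w.coeff γ ≠ 0 := fun hc => hcγ (by rw [h1, hc, sub_self])
            exact hwsupp γ (mem_support_iff.2 h2) hγne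
        obtain ⟨γ0, hγ0⟩ := hnonempty
        have hbot : ⊥ < mo.toSyn β₀ := lt_of_le_of_lt bot_le (hall γ0 hγ0)
        exact (Finset.sup_lt_iff hbot).2 hall
      obtain ⟨u, hu, r, hr, heq⟩ := ih _ hsublt (f - w) rfl
      refine ⟨u + w, hermite_add XX p hu hwherm, r, hr, ?_⟩
      have : f = (f - w) + w := by ring
      rw [this, heq]
      ring
  · -- standard: put the leading term in the remainder
    set w : MvPolynomial (Fin d) ℝ := monomial β₀ (f.coeff β₀) with hw
    have hwspan : w ∈ stdSpan mo XX p := by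
      have : w = (f.coeff β₀) • (monomial β₀ (1:ℝ)) := by
        rw [hw, smul_monomial, smul_eq_mul, mul_one]
      rw [this]
      exact Submodule.smul_mem _ _ (Submodule.subset_span ⟨β₀, rfl, hstd⟩)
    rcases eq_or_ne (f - w) 0 with hfw | hfw
    · exact ⟨0, hermite_zero XX p, w, hwspan, by rw [sub_eq_zero.1 hfw]; ring⟩
    · have hsublt : (f - w).support.sup mo.toSyn < s := by
        rw [← hfs, hβ₀eq]
        have hnonempty : (f - w).support.Nonempty := by
          rw [Finset.nonempty_iff_ne_empty]
          intro hc
          exact hfw (support_eq_empty.1 hc)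
        have hall : ∀ γ ∈ (f - w).support, mo.toSyn γ < mo.toSyn β₀ := by
          intro γ hγ
          have hcγ : (f - w).coeff γ ≠ 0 := mem_support_iff.1 hγ
          have hγne : γ ≠ β₀ := by
            intro hc
            subst hc
            rw [coeff_sub, hw, coeff_monomial, if_pos rfl, sub_self] at hcγ
            exact hcγ rfl
          rw [coeff_sub, hw, coeff_monomial, if_neg (fun hc => hγne hc.symm), sub_zero] at hcγ
          exact lt_of_le_of_ne (hmax γ (mem_support_iff.2 hcγ))
            fun hc => hγne (mo.toSyn.injective hc)
        obtain ⟨γ0, hγ0⟩ := hnonempty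
        have hbot : ⊥ < mo.toSyn β₀ := lt_of_le_of_lt bot_le (hall γ0 hγ0)
        exact (Finset.sup_lt_iff hbot).2 hall
      obtain ⟨u, hu, r, hr, heq⟩ := ih _ hsublt (f - w) rfl
      refine ⟨u, hu, r + w, Submodule.add_mem _ hr hwspan, ?_⟩
      have : f = (f - w) + w := by ring
      rw [this, heq]
      ring

/-- A nonzero element of the Hermite ideal cannot be supported on standard monomials. -/
lemma eq_zero_of_mem_both {f : MvPolynomial (Fin d) ℝ} (hfI : f ∈ hermiteSet XX p)
    (hfS : f ∈ stdSpan mo XX p) : f = 0 := by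
  by_contra hf0
  have hsupp : f.support.Nonempty := by
    rw [Finset.nonempty_iff_ne_empty]
    intro hc
    exact hf0 (support_eq_empty.1 hc)
  obtain ⟨β₀, hβ₀mem, hβ₀eq⟩ := Finset.exists_mem_eq_sup f.support hsupp mo.toSyn
  have hmax : ∀ γ ∈ f.support, mo.toSyn γ ≤ mo.toSyn β₀ := fun γ hγ => by
    rw [← hβ₀eq]; exact Finset.le_sup hγ
  have hcoeff : f.coeff β₀ ≠ 0 := mem_support_iff.1 hβ₀mem
  have hlt : (monomial β₀ (f.coeff β₀)) ∈ ltSet mo XX p :=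
    ⟨f, hfI, hf0, β₀, hβ₀mem, hmax, rfl⟩
  have hmem : (monomial β₀ (1:ℝ)) ∈ Ideal.span (ltSet mo XX p) := by
    have : (monomial β₀) (1:ℝ) = C (f.coeff β₀)⁻¹ * monomial β₀ (f.coeff β₀) := by
      rw [C_mul_monomial, inv_mul_cancel₀ hcoeff]
    rw [this]
    exact Ideal.mul_mem_left _ _ (Ideal.subset_span hlt)
  exact support_of_mem_stdSpan mo XX p hfS β₀ hβ₀mem hmem

end Groebner

end HermiteAux

/-- The Hermite interpolation problem has a unique solution in the space `S_I` spanned by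
the monomials not lying in the ideal generated by the leading terms of the Hermite ideal. -/
theorem hermite_unique_solution_in_SI {d m : ℕ} (hd : 0 < d) (hm : 0 < m)
    (X : Fin m → (Fin d → ℝ)) (hX : Function.Injective X) (p : Fin m → ℕ)
    (mo : MonomialOrder (Fin d)) :
    ∀ c : Fin m → (Fin d → ℕ) → ℝ,
      ∃! f : MvPolynomial (Fin d) ℝ,
        f ∈ Submodule.span ℝ {g : MvPolynomial (Fin d) ℝ |
              ∃ β : Fin d →₀ ℕ, g = monomial β (1 : ℝ) ∧
                g ∉ Ideal.span {lt : MvPolynomial (Fin d) ℝ |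
                  ∃ h ∈ hermiteSet X p, h ≠ 0 ∧ ∃ β₀ ∈ h.support,
                    (∀ γ ∈ h.support, mo.toSyn γ ≤ mo.toSyn β₀) ∧
                    lt = monomial β₀ (h.coeff β₀)}} ∧
        ∀ q, ∀ α : Fin d → ℕ, (∑ i, α i) ≤ p q →
          MvPolynomial.eval (X q) (pderivPow α f) = c q α := by
  intro c
  obtain ⟨F, hF⟩ := HermiteAux.exists_interpolant X p hX c
  obtain ⟨u, hu, r, hr, hFur⟩ := HermiteAux.decompose mo X p F
  have hrjets : ∀ q, ∀ α : Fin d → ℕ, (∑ i, α i) ≤ p q →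
      MvPolynomial.eval (X q) (pderivPow α r) = c q α := by
    intro q α hα
    have h1 := hF q α hα
    rw [hFur, map_add, map_add, hu q α hα, zero_add] at h1
    exact h1
  refine ⟨r, ⟨hr, hrjets⟩, ?_⟩
  rintro g ⟨hgspan, hgjets⟩
  have hgr : g - r ∈ hermiteSet X p := by
    intro q α hα
    rw [map_sub, map_sub, hgjets q α hα, hrjets q α hα, sub_self]
  have hzero := HermiteAux.eq_zero_of_mem_both mo X p hgr
    (Submodule.sub_mem (HermiteAux.stdSpan mo X p) hgspan hr)
  exact sub_eq_zero.1 hzero
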